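/- For the two-point space 𝓗 = {0, 1}, let p assign mass α to 0 and q assign mass β to 0, with α ≠ β. Then there exists a function C : 𝓗 → ℝ such that E_p[f(C − m_q)] + E_q[f(m_p − C)] > 0, where m_p = E_p[C], m_q = E_q[C], f(x) = log σ(x) + log 2, and σ is the logistic sigmoid. Hence the relativistic average divergence strictly separates distinct Bernoulli distributions. -/

import Mathlib

noncomputable def sigm (x : ℝ) : ℝ := 1 / (1 + Real.exp (-x))

noncomputable def f (x : ℝ) : ℝ := Real.log (sigm x) + Real.log 2

lemma exp_pos_add (x : ℝ) : (0:ℝ) < 1 + Real.exp (-x) := by positivity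

lemma f_eq (x : ℝ) : f x = Real.log 2 - Real.log (1 + Real.exp (-x)) := by
  unfold f sigm
  rw [one_div, Real.log_inv]; ring

lemma f_zero : f 0 = 0 := by
  rw [f_eq]
  norm_num

lemma f_deriv (x : ℝ) : HasDerivAt f (Real.exp (-x) / (1 + Real.exp (-x))) x := by
  have h1 : HasDerivAt (fun y : ℝ => 1 + Real.exp (-y)) (Real.exp (-x) * (-1)) x :=
    (((Real.hasDerivAt_exp (-x)).comp x (hasDerivAt_neg x))).const_add 1
  have h2 := ((hasDerivAt_const x (Real.log 2)).sub (h1.log (exp_pos_add x).ne'))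
  have hfe : f = fun y => Real.log 2 - Real.log (1 + Real.exp (-y)) := funext f_eq
  rw [hfe]
  exact h2.congr_deriv (by ring)

lemma deriv_pos_exists {g : ℝ → ℝ} {c : ℝ} (hg : HasDerivAt g c 0) (h0 : g 0 = 0)
    (hc : c ≠ 0) : ∃ t, 0 < g t := by
  have hs := hasDerivAt_iff_tendsto_slope.mp hg
  have hslope : ∀ t : ℝ, t ≠ 0 → slope g 0 t = g t / t := by
    intro t ht
    simp [slope, h0]
    ring
  rcases hc.lt_or_gt with h | h
  · have h2 : Filter.Tendsto (slope g 0) (nhdsWithin 0 (Set.Iio 0)) (nhds c) :=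
      hs.mono_left (nhdsWithin_mono _ (fun x hx => ne_of_lt hx))
    have h3 : ∀ᶠ t in nhdsWithin (0:ℝ) (Set.Iio 0), slope g 0 t < 0 :=
      h2.eventually (eventually_lt_nhds h)
    obtain ⟨t, ht1, ht2⟩ := (h3.and self_mem_nhdsWithin).exists
    have htne : t ≠ 0 := ne_of_lt ht2
    have hgt : g t / t < 0 := by rw [← hslope t htne]; exact ht1
    refine ⟨t, ?_⟩
    have := mul_pos_of_neg_of_neg hgt ht2
    rwa [div_mul_cancel₀ _ htne] at this
  · have h2 : Filter.Tendsto (slope g 0) (nhdsWithin 0 (Set.Ioi 0)) (nhds c) :=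
      hs.mono_left (nhdsWithin_mono _ (fun x hx => ne_of_gt hx))
    have h3 : ∀ᶠ t in nhdsWithin (0:ℝ) (Set.Ioi 0), 0 < slope g 0 t :=
      h2.eventually (eventually_gt_nhds h)
    obtain ⟨t, ht1, ht2⟩ := (h3.and self_mem_nhdsWithin).exists
    have htne : t ≠ 0 := ne_of_gt ht2
    have hgt : 0 < g t / t := by rw [← hslope t htne]; exact ht1
    refine ⟨t, ?_⟩
    have := mul_pos hgt ht2
    rwa [div_mul_cancel₀ _ htne] at this

theorem raGAN_separates_bernoulli
    (α β : ℝ) (hα : α ∈ Set.Icc (0 : ℝ) 1) (hβ : β ∈ Set.Icc (0 : ℝ) 1)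
    (hne : α ≠ β) :
    ∃ C : Fin 2 → ℝ,
      0 <
        (α * f (C 0 - (β * C 0 + (1 - β) * C 1)) +
          (1 - α) * f (C 1 - (β * C 0 + (1 - β) * C 1))) +
        (β * f ((α * C 0 + (1 - α) * C 1) - C 0) +
          (1 - β) * f ((α * C 0 + (1 - α) * C 1) - C 1)) := by
  set g : ℝ → ℝ := fun t =>
    (α * f ((1 - β) * t) + (1 - α) * f ((-β) * t)) +
    (β * f ((α - 1) * t) + (1 - β) * f (α * t)) with hgdef
  have hterm : ∀ c : ℝ, HasDerivAt (fun t : ℝ => f (c * t))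
      (Real.exp (-(c * 0)) / (1 + Real.exp (-(c * 0))) * (c * 1)) 0 :=
    fun c => (f_deriv (c * 0)).comp 0 ((hasDerivAt_id 0).const_mul c)
  have hg : HasDerivAt g
      ((α * (Real.exp (-((1-β) * 0)) / (1 + Real.exp (-((1-β) * 0))) * ((1-β) * 1)) +
        (1 - α) * (Real.exp (-((-β) * 0)) / (1 + Real.exp (-((-β) * 0))) * ((-β) * 1))) +
       (β * (Real.exp (-((α-1) * 0)) / (1 + Real.exp (-((α-1) * 0))) * ((α-1) * 1)) +
        (1 - β) * (Real.exp (-(α * 0)) / (1 + Real.exp (-(α * 0))) * (α * 1)))) 0 :=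
    (((hterm (1-β)).const_mul α).add ((hterm (-β)).const_mul (1-α))).add
      (((hterm (α-1)).const_mul β).add ((hterm α).const_mul (1-β)))
  have hgc : HasDerivAt g (α - β) 0 := by
    convert hg using 1
    simp [Real.exp_zero]
    ring
  have h0 : g 0 = 0 := by simp [hgdef, f_zero]
  obtain ⟨t, ht⟩ := deriv_pos_exists hgc h0 (sub_ne_zero.mpr hne)
  refine ⟨![t, 0], ?_⟩
  simp only [Matrix.cons_val_zero, Matrix.cons_val_one, Matrix.head_cons]
  have : g t = (α * f (t - (β * t + (1 - β) * 0)) +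
          (1 - α) * f (0 - (β * t + (1 - β) * 0))) +
        (β * f ((α * t + (1 - α) * 0) - t) +
          (1 - β) * f ((α * t + (1 - α) * 0) - 0)) := by
    simp only [hgdef]
    ring_nf
  linarith [this ▸ ht]
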